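/- Let P = (p_1, …, p_n) be a finite sequence of pairwise distinct points in ℝ^d and q a query point whose distances to p_1, …, p_n are pairwise distinct. Fix m ≤ n and k < m, let p_{i_1}, …, p_{i_k} with i_1 < i_2 < … < i_k ≤ m be the k nearest neighbors of q in the prefix P_{1:m}, and let p_ℓ (ℓ ≤ m) be the (k+1)-th nearest neighbor of q in P_{1:m}. Then either ℓ < i_1, or there exists j ∈ {1, …, k} such that i_j < ℓ and Cell(p_{i_j}; P_{1:ℓ}) is a proper subset of Cell(p_{i_j}; P_{1:ℓ−1}); i.e., p_ℓ is a successor of p_{i_j} with respect to the full sequence P. Hence k-NN queries restricted to any prefix P_{1:m} are answered by the successor lists of the full sequence restricted to indices at most m, with no recomputation. -/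

import Mathlib

open Set

noncomputable section

/-- Euclidean space `ℝ^d`. -/
abbrev E (d : ℕ) := EuclideanSpace ℝ (Fin d)

/-- The Voronoi cell of `p` with respect to the site set `S`:
all points at least as close to `p` as to every site of `S`. -/
def cell {d : ℕ} (p : E d) (S : Set (E d)) : Set (E d) :=
  {x | ∀ s ∈ S, dist x p ≤ dist x s}

/-- The prefix set `P_{1:m}` consisting of the first `m` points of the
sequence `p` (0-based indices `< m`). -/
def pref {d n : ℕ} (p : Fin n → E d) (m : ℕ) : Set (E d) :=
  p '' {i : Fin n | (i : ℕ) < m}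

/-- `p j` is a successor of `p i` (`p j ∈ L i`): `i < j` and the insertion of
`p j` prunes the Voronoi cell of `p i`, i.e. `Cell(p_i; P_{1:j})` is a proper
subset of `Cell(p_i; P_{1:j-1})` (in 1-based notation). -/
def isSucc {d n : ℕ} (p : Fin n → E d) (i j : Fin n) : Prop :=
  i < j ∧ cell (p i) (pref p ((j : ℕ) + 1)) ⊂ cell (p i) (pref p (j : ℕ))

/-- `p i` is the nearest neighbor `Φ_{1:m}(q)` of `q` in the prefix `P_{1:m}`. -/
def isNearest {d n : ℕ} (p : Fin n → E d) (q : E d) (m : ℕ) (i : Fin n) : Prop :=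
  (i : ℕ) < m ∧ ∀ j : Fin n, (j : ℕ) < m → dist q (p i) ≤ dist q (p j)

lemma aff_aux {d : ℕ} (q w s : E d) (t : ℝ) :
    dist (q + t • (w - q)) s ^ 2 - dist (q + t • (w - q)) w ^ 2
      = (1 - t) * (dist q s ^ 2 - dist q w ^ 2) + t * (dist w s ^ 2) := by
  have h : ∀ a b : E d, dist a b ^ 2 = (inner ℝ (a - b) (a - b) : ℝ) := fun a b => by
    rw [dist_eq_norm, ← real_inner_self_eq_norm_sq]
  simp only [h, inner_sub_left, inner_sub_right, inner_add_left, inner_add_right,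
    real_inner_smul_left, real_inner_smul_right]
  rw [real_inner_comm w q, real_inner_comm s q, real_inner_comm s w]
  ring

lemma phi_root (A B t : ℝ) (hAB : A - B ≠ 0) :
    (1 - t) * A + t * B = (B - A) * (t - A / (A - B)) := by
  field_simp; ring

set_option maxHeartbeats 2000000 in
/-- prefix version of Theorem 0: for the `k` nearest neighbors
of `q` within the prefix `P_{1:m}`, the (k+1)-th nearest neighbor in `P_{1:m}`
either precedes all of them, or is a successor (w.r.t. the full sequence) of
one of them. -/
theorem stmt1
    {d n m k : ℕ} (hd : 1 ≤ d) (hm : m ≤ n) (hk : k < m) (hk0 : 0 < k)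
    (p : Fin n → E d) (hp : Function.Injective p)
    (q : E d) (hq : Function.Injective fun i => dist q (p i))
    (ι : Fin k → Fin n) (hmono : StrictMono ι)
    (hιm : ∀ j, (ι j : ℕ) < m)
    (hknn : ∀ a b : Fin n, (a : ℕ) < m → (b : ℕ) < m →
      (∃ j, ι j = a) → (¬ ∃ j, ι j = b) → dist q (p a) < dist q (p b))
    (ℓ : Fin n) (hℓm : (ℓ : ℕ) < m) (hℓ : ¬ ∃ j, ι j = ℓ)
    (hℓnear : ∀ b : Fin n, (b : ℕ) < m → (¬ ∃ j, ι j = b) →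
      dist q (p ℓ) ≤ dist q (p b)) :
    ℓ < ι ⟨0, hk0⟩ ∨ ∃ j : Fin k, isSucc p (ι j) ℓ := by
  rcases lt_or_ge ℓ (ι ⟨0, hk0⟩) with hcase | hcase
  · exact Or.inl hcase
  right
  have hι0 : ι ⟨0, hk0⟩ < ℓ := hcase.lt_of_ne (fun h => hℓ ⟨⟨0, hk0⟩, h⟩)
  set w : E d := p ℓ with hwdef
  set A : Fin n → ℝ := fun i => dist q (p i) ^ 2 - dist q w ^ 2 with hAdef
  set B : Fin n → ℝ := fun i => dist w (p i) ^ 2 with hBdef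
  set φ : Fin n → ℝ → ℝ := fun i t => (1 - t) * A i + t * B i with hφdef
  have key : ∀ (i : Fin n) (t : ℝ),
      dist (q + t • (w - q)) (p i) ^ 2 - dist (q + t • (w - q)) w ^ 2 = φ i t := by
    intro i t
    rw [aff_aux]
  -- basic sign facts
  have hBpos : ∀ i : Fin n, i ≠ ℓ → 0 < B i := by
    intro i hi
    have hne : w ≠ p i := fun h => hi (hp h).symm
    have := dist_pos.mpr hne
    positivity
  have hAneg : ∀ j : Fin k, A (ι j) < 0 := by
    intro j
    have h := hknn (ι j) ℓ (hιm j) hℓm ⟨j, rfl⟩ hℓ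
    have h2 : (0:ℝ) ≤ dist q (p (ι j)) := dist_nonneg
    simp only [hAdef]
    nlinarith
  have hApos : ∀ i : Fin n, (i : ℕ) < (ℓ : ℕ) → (¬ ∃ j, ι j = i) → 0 < A i := by
    intro i hiℓ hni
    have him : (i : ℕ) < m := hiℓ.trans hℓm
    have hle := hℓnear i him hni
    have hne : dist q (p ℓ) ≠ dist q (p i) := by
      intro h
      have h2 : ℓ = i := hq h
      rw [h2] at hiℓ
      exact lt_irrefl _ hiℓ
    have hlt : dist q w < dist q (p i) := lt_of_le_of_ne hle hne
    have h2 : (0:ℝ) ≤ dist q w := dist_nonneg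
    simp only [hAdef]
    nlinarith
  -- the finset J of accepted neighbors preceding ℓ
  set J : Finset (Fin k) := Finset.univ.filter (fun j => ι j < ℓ) with hJdef
  have hJmem : ∀ j : Fin k, j ∈ J ↔ ι j < ℓ := by
    intro j; simp [hJdef]
  have hJne : J.Nonempty := ⟨⟨0, hk0⟩, (hJmem _).mpr hι0⟩
  set tv : Fin k → ℝ := fun j => A (ι j) / (A (ι j) - B (ι j)) with htvdef
  have hBposι : ∀ j : Fin k, 0 < B (ι j) := by
    intro j
    exact hBpos _ (fun h => hℓ ⟨j, h⟩)
  have hABne : ∀ j : Fin k, A (ι j) - B (ι j) ≠ 0 := by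
    intro j
    have := hAneg j; have := hBposι j; intro h; linarith
  have hroot : ∀ (j : Fin k) (t : ℝ),
      φ (ι j) t = (B (ι j) - A (ι j)) * (t - tv j) := by
    intro j t
    simp only [hφdef, htvdef]
    exact phi_root _ _ _ (hABne j)
  have htv01 : ∀ j : Fin k, 0 < tv j ∧ tv j < 1 := by
    intro j
    have hA := hAneg j; have hB := hBposι j
    constructor
    · apply div_pos_iff.mpr
      right; constructor <;> linarith
    · rw [div_lt_one_of_neg (by linarith)]
      linarith
  set ts : ℝ := J.sup' hJne tv with htsdef
  obtain ⟨j1, hj1J, hj1⟩ := Finset.exists_mem_eq_sup' hJne tv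
  have hts0 : 0 < ts := by rw [htsdef, hj1]; exact (htv01 j1).1
  have hts1 : ts < 1 := by rw [htsdef, hj1]; exact (htv01 j1).2
  have htsle : ∀ j ∈ J, tv j ≤ ts := fun j hj => Finset.le_sup' tv hj
  set T : Finset (Fin k) := J.filter (fun j => tv j = ts) with hTdef
  have hTne : T.Nonempty := ⟨j1, by simp [hTdef, hj1J, hj1.symm]; exact htsdef.symm⟩
  obtain ⟨js, hjsT, hjsmin⟩ := T.exists_min_image (fun j => B (ι j)) hTne
  have hjsJ : js ∈ J := (Finset.mem_filter.mp hjsT).1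
  have hjsℓ : ι js < ℓ := (hJmem js).mp hjsJ
  have hjsts : tv js = ts := (Finset.mem_filter.mp hjsT).2
  have hφjts : φ (ι js) ts = 0 := by
    rw [hroot, hjsts]; ring
  clear_value tv ts
  -- value nonnegativity at ts
  have hV : ∀ i : Fin n, (i : ℕ) < (ℓ : ℕ) → 0 ≤ φ i ts := by
    intro i hiℓ
    by_cases hir : ∃ j, ι j = i
    · obtain ⟨j, rfl⟩ := hir
      have hjJ : j ∈ J := (hJmem j).mpr (by exact hiℓ)
      have h1 := htsle j hjJ
      rw [hroot]
      have := hAneg j; have := hBposι j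
      nlinarith
    · have hA := hApos i hiℓ hir
      have hB := hBpos i (fun h => by rw [h] at hiℓ; exact lt_irrefl _ hiℓ)
      simp only [hφdef]
      nlinarith
  -- slope comparison for tied indices
  set sl : Fin n → ℝ := fun i => (B i - A i) - (B (ι js) - A (ι js)) with hsldef
  clear_value A B φ sl
  have hslope0 : ∀ i : Fin n, (i : ℕ) < (ℓ : ℕ) → φ i ts = 0 → 0 ≤ sl i := by
    intro i hiℓ hzero
    by_cases hir : ∃ j, ι j = i
    · obtain ⟨j, rfl⟩ := hir
      have hjJ : j ∈ J := (hJmem j).mpr (by exact hiℓ)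
      have hAj := hAneg j; have hBj := hBposι j
      have htvj : tv j = ts := by
        rw [hroot] at hzero
        rcases mul_eq_zero.mp hzero with h | h
        · exact absurd h (by intro hc; nlinarith)
        · linarith
      have hjT : j ∈ T := Finset.mem_filter.mpr ⟨hjJ, htvj⟩
      have hBle := hjsmin j hjT
      have heq1 : (1 - ts) * A (ι j) + ts * B (ι j) = 0 := by
        rw [← hzero]; simp only [hφdef]
      have heq2 : (1 - ts) * A (ι js) + ts * B (ι js) = 0 := by
        rw [← hφjts]; simp only [hφdef]
      simp only [hsldef]
      nlinarith
    · have hA := hApos i hiℓ hir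
      have hB := hBpos i (fun h => by rw [h] at hiℓ; exact lt_irrefl _ hiℓ)
      have : 0 < φ i ts := by simp only [hφdef]; nlinarith
      linarith
  -- choose epsilon
  set S : Finset (Fin n) := Finset.univ.filter (fun i : Fin n => (i : ℕ) < (ℓ : ℕ)) with hSdef
  have hSmem : ∀ i : Fin n, i ∈ S ↔ (i : ℕ) < (ℓ : ℕ) := by intro i; simp [hSdef]
  have hSne : S.Nonempty := ⟨ι ⟨0, hk0⟩, (hSmem _).mpr hι0⟩
  set δ : Fin n → ℝ := fun i => if sl i < 0 then φ i ts / (-sl i) else 1 with hδdef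
  clear_value δ
  have hδpos : ∀ i ∈ S, 0 < δ i := by
    intro i hiS
    have hiℓ : (i : ℕ) < (ℓ : ℕ) := (hSmem i).mp hiS
    simp only [hδdef]
    split_ifs with hs
    · apply div_pos
      · rcases lt_or_eq_of_le (hV i hiℓ) with h | h
        · exact h
        · exact absurd (hslope0 i hiℓ h.symm) (by linarith)
      · linarith
    · norm_num
  set ε : ℝ := S.inf' hSne δ with hεdef
  have hεpos : 0 < ε := by
    rw [hεdef, Finset.lt_inf'_iff]
    exact hδpos
  have hεle : ∀ i ∈ S, ε ≤ δ i := fun i hi => Finset.inf'_le δ hi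
  clear_value ε
  -- the witness point
  set t' : ℝ := ts + ε with ht'def
  have hstep : ∀ i : Fin n, φ i t' = φ i ts + ε * (B i - A i) := by
    intro i; simp only [hφdef, ht'def]; ring
  clear_value t'
  have hφa_pos : 0 < φ (ι js) t' := by
    rw [hstep, hφjts]
    have h1 : 0 < B (ι js) - A (ι js) := by
      have := hAneg js; have := hBposι js; linarith
    have h2 := mul_pos hεpos h1
    linarith
  have hcomp : ∀ i : Fin n, (i : ℕ) < (ℓ : ℕ) → φ (ι js) t' ≤ φ i t' := by
    intro i hiℓ
    have hiS : i ∈ S := (hSmem i).mpr hiℓ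
    have hVi := hV i hiℓ
    have h1 : φ i t' - φ (ι js) t' = φ i ts + ε * sl i := by
      rw [hstep, hstep, hφjts]; simp only [hsldef]; ring
    rcases lt_or_ge (sl i) 0 with hs | hs
    · have hδi : δ i = φ i ts / (-sl i) := by simp only [hδdef, if_pos hs]
      have hεi := hεle i hiS
      rw [hδi] at hεi
      have : ε * (-sl i) ≤ φ i ts := (le_div_iff₀ (by linarith)).mp hεi
      linarith
    · have := mul_nonneg hεpos.le hs
      linarith
  set y : E d := q + t' • (w - q) with hydef
  -- y is in the cell of p (ι js) w.r.t. pref p ℓ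
  have hy1 : y ∈ cell (p (ι js)) (pref p (ℓ : ℕ)) := by
    intro s hs
    obtain ⟨i, hi, rfl⟩ := hs
    have hiℓ : (i : ℕ) < (ℓ : ℕ) := hi
    have h1 := key i t'
    have h2 := key (ι js) t'
    rw [← hydef] at h1 h2
    have h3 := hcomp i hiℓ
    have hd1 : (0:ℝ) ≤ dist y (p (ι js)) := dist_nonneg
    have hd2 : (0:ℝ) ≤ dist y (p i) := dist_nonneg
    nlinarith [h1, h2]
  have hy2 : dist y w < dist y (p (ι js)) := by
    have h2 := key (ι js) t'
    rw [← hydef] at h2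
    have hd1 : (0:ℝ) ≤ dist y (p (ι js)) := dist_nonneg
    have hd2 : (0:ℝ) ≤ dist y w := dist_nonneg
    nlinarith [h2, hφa_pos]
  refine ⟨js, hjsℓ, ?_, ?_⟩
  · intro z hz s hs
    apply hz
    obtain ⟨i, hi, rfl⟩ := hs
    exact ⟨i, Nat.lt_succ_of_lt hi, rfl⟩
  · intro hsub
    have hyc := hsub hy1
    have := hyc w ⟨ℓ, Nat.lt_succ_self _, rfl⟩
    linarith
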